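/- For real parameters h, u, w, σ, p̄, p_b, g, c, let A be the 6×6 real matrix with rows: row 1: (0, 1, 0, 0, 0, 0); row 2: (g·h − u², 2·u, 0, 0, 1, 0); row 3: (−u·w, w, u, 0, 0, 0); row 4: (−u·σ, σ, 0, u, 0, 0); row 5: (−u·(p̄ + c²), p̄ + c², 0, 0, u, 0); row 6: (−u·p_b, p_b, 0, 0, 0, u). Then for every real λ, det(A − λ·I) = (u − λ)⁴ · ((u − λ)² − (g·h + p̄ + c²)). -/

import Mathlib

/-- The quasilinear system matrix `A(U) = ∂F/∂U + B(U)` of the hyperbolic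
reformulation of the Serre-Green-Naghdi system, in conserved variables. -/
def sgnMatrix (h u w sg pbar pb g c : ℝ) : Matrix (Fin 6) (Fin 6) ℝ :=
  !![0, 1, 0, 0, 0, 0;
     g * h - u ^ 2, 2 * u, 0, 0, 1, 0;
     -(u * w), w, u, 0, 0, 0;
     -(u * sg), sg, 0, u, 0, 0;
     -(u * (pbar + c ^ 2)), pbar + c ^ 2, 0, 0, u, 0;
     -(u * pb), pb, 0, 0, 0, u]

@[simp]
lemma cons_val_five' {α : Type*} {m : ℕ} (x : α) (u : Fin (m+5) → α) :
    Matrix.vecCons x u 5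
      = Matrix.vecHead (Matrix.vecTail (Matrix.vecTail (Matrix.vecTail (Matrix.vecTail u)))) :=
  rfl

set_option maxHeartbeats 1000000 in
set_option maxRecDepth 8000 in
theorem stmt_8 (h u w sg pbar pb g c : ℝ) :
    ∀ lam : ℝ,
      (sgnMatrix h u w sg pbar pb g c - lam • (1 : Matrix (Fin 6) (Fin 6) ℝ)).det
        = (u - lam) ^ 4 * ((u - lam) ^ 2 - (g * h + pbar + c ^ 2)) := by
  intro lam
  have hM : sgnMatrix h u w sg pbar pb g c - lam • (1 : Matrix (Fin 6) (Fin 6) ℝ)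
      = !![-lam, 1, 0, 0, 0, 0;
           g * h - u ^ 2, 2 * u - lam, 0, 0, 1, 0;
           -(u * w), w, u - lam, 0, 0, 0;
           -(u * sg), sg, 0, u - lam, 0, 0;
           -(u * (pbar + c ^ 2)), pbar + c ^ 2, 0, 0, u - lam, 0;
           -(u * pb), pb, 0, 0, 0, u - lam] := by
    ext i j
    fin_cases i <;> fin_cases j <;>
      first
        | rfl
        | (simp [sgnMatrix, Matrix.one_apply])
  rw [hM]
  simp [Matrix.det_succ_row_zero, Fin.sum_univ_succ, Fin.succAbove, Fin.castSucc, Fin.castAdd, Fin.castLE]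
  ring
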